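/- arXiv:2511.18671 — 3 statements merged into one kernel-verified Lean document; each statement's English description precedes it below -/
import Mathlib

section
/- Let S and A be finite nonempty types, r : S × A → ℝ a reward function, P : S × A → PMF S a transition function, and γ ∈ [0,1) a discount factor. For a policy π : S → PMF A, define finite-horizon value functions recursively by V₀^π(s) = 0, Q_{n+1}^π(s,a) = r(s,a) + γ · ∑_{s'} P(s,a)(s') · V_n^π(s'), and V_{n+1}^π(s) = ∑_a π(s)(a) · Q_{n+1}^π(s,a). Suppose a policy π' satisfies the improvement condition ∑_a π'(s)(a) · Q_n^π(s,a) ≥ V_n^π(s) for every state s and every horizon n ≤ N. Then V_N^{π'}(s) ≥ V_N^π(s) for every state s. -/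
open Finset

/-- Finite-horizon state-value function: `V 0 = 0` and
`V (n+1) s = ∑ a, π s a * (r (s,a) + γ * ∑ s', P (s,a) s' * V n s')`. -/
noncomputable def Vfun {S A : Type*} [Fintype S] [Fintype A]
    (r : S × A → ℝ) (P : S × A → PMF S) (γ : ℝ) (π : S → PMF A) :
    ℕ → S → ℝ
  | 0 => fun _ => 0
  | n + 1 => fun s =>
      ∑ a, (π s a).toReal *
        (r (s, a) + γ * ∑ s', (P (s, a) s').toReal * Vfun r P γ π n s')

/-- Finite-horizon action-value function: `Q 0 = 0` and
`Q (n+1) (s,a) = r (s,a) + γ * ∑ s', P (s,a) s' * V n s'`. -/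
noncomputable def Qfun {S A : Type*} [Fintype S] [Fintype A]
    (r : S × A → ℝ) (P : S × A → PMF S) (γ : ℝ) (π : S → PMF A) :
    ℕ → S → A → ℝ
  | 0 => fun _ _ => 0
  | n + 1 => fun s a =>
      r (s, a) + γ * ∑ s', (P (s, a) s').toReal * Vfun r P γ π n s'

/-- Finite-horizon policy improvement: if at every state and every horizon
`n ≤ N` the policy `π'` satisfies `∑ a, π' s a * Q_n^π s a ≥ V_n^π s`,
then `V_N^{π'} s ≥ V_N^π s` at every state. -/
theorem finite_horizon_policy_improvement {S A : Type*}
    [Fintype S] [Fintype A] [Nonempty S] [Nonempty A]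
    (r : S × A → ℝ) (P : S × A → PMF S) (γ : ℝ)
    (hγ0 : 0 ≤ γ) (hγ1 : γ < 1)
    (π π' : S → PMF A) (N : ℕ)
    (himp : ∀ s, ∀ n ≤ N,
      ∑ a, (π' s a).toReal * Qfun r P γ π n s a ≥ Vfun r P γ π n s) :
    ∀ s, Vfun r P γ π' N s ≥ Vfun r P γ π N s := by
  suffices h : ∀ n ≤ N, ∀ s, Vfun r P γ π' n s ≥ Vfun r P γ π n s from
    h N le_rfl
  intro n hn
  induction n with
  | zero => intro s; simp [Vfun]
  | succ m ih =>
    intro s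
    have ihm := ih (Nat.le_of_succ_le hn)
    calc Vfun r P γ π' (m + 1) s
        ≥ ∑ a, (π' s a).toReal * Qfun r P γ π (m + 1) s a := by
          simp only [Vfun, Qfun]
          apply Finset.sum_le_sum
          intro a _
          apply mul_le_mul_of_nonneg_left _ ENNReal.toReal_nonneg
          apply add_le_add_right
          apply mul_le_mul_of_nonneg_left _ hγ0
          apply Finset.sum_le_sum
          intro s' _
          exact mul_le_mul_of_nonneg_left (ihm s') ENNReal.toReal_nonneg
      _ ≥ Vfun r P γ π (m + 1) s := himp s (m + 1) hn
end

section
/- Let S and A be finite nonempty types, r : S × A → ℝ, P : S × A → PMF S, and γ ∈ [0,1). Let π_g : S → PMF A be a policy and let Q_g : S × A → ℝ satisfy the Bellman equation for π_g: Q_g(s,a) = r(s,a) + γ · ∑_{s'} P(s,a)(s') · ∑_{a'} π_g(s')(a') · Q_g(s',a') for all s, a. Let t : S → ℝ be a threshold function such that for every state s, c(s) := ∑_{a : Q_g(s,a) ≥ t(s)} π_g(s)(a) > 0, and define the percentile-greedy policy π_ρ by π_ρ(s)(a) = π_g(s)(a)/c(s) if Q_g(s,a) ≥ t(s) and 0 otherwise.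 Let Q_ρ : S × A → ℝ satisfy the Bellman equation for π_ρ: Q_ρ(s,a) = r(s,a) + γ · ∑_{s'} P(s,a)(s') · ∑_{a'} π_ρ(s')(a') · Q_ρ(s',a') for all s, a. Then for every state s, ∑_a π_ρ(s)(a) · Q_ρ(s,a) ≥ ∑_a π_g(s)(a) · Q_g(s,a). -/
open Finset

lemma pmf_sum_toReal {X : Type*} [Fintype X] (p : PMF X) :
    ∑ x, (p x).toReal = 1 := by
  have h1 : ∑ x, p x = 1 := by rw [← p.tsum_coe, tsum_fintype]
  have h2 : ∀ x ∈ (univ : Finset X), p x ≠ ⊤ := fun x _ => p.apply_ne_top x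
  rw [← ENNReal.toReal_sum h2, h1, ENNReal.toReal_one]

/-- Discrete-action case of Theorem 5.1: the percentile-greedy policy `πρ`,
obtained by conditioning the baseline policy `πg` on actions whose
action-value `Qg` lies above the threshold `t s`, is at least as good as
`πg` at every state. -/
theorem percentile_greedy_improvement_discrete {S A : Type*}
    [Fintype S] [Fintype A] [Nonempty S] [Nonempty A]
    (r : S × A → ℝ) (P : S × A → PMF S) (γ : ℝ)
    (hγ0 : 0 ≤ γ) (hγ1 : γ < 1)
    (πg : S → PMF A) (Qg : S → A → ℝ)
    (hQg : ∀ s a, Qg s a =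
      r (s, a) + γ * ∑ s', (P (s, a) s').toReal *
        ∑ a', (πg s' a').toReal * Qg s' a')
    (t : S → ℝ) (c : S → ℝ)
    (hc : ∀ s, c s =
      ∑ a ∈ Finset.univ.filter (fun a => t s ≤ Qg s a), (πg s a).toReal)
    (hc_pos : ∀ s, 0 < c s)
    (πρ : S → A → ℝ)
    (hπρ : ∀ s a, πρ s a = if t s ≤ Qg s a then (πg s a).toReal / c s else 0)
    (Qρ : S → A → ℝ)
    (hQρ : ∀ s a, Qρ s a =
      r (s, a) + γ * ∑ s', (P (s, a) s').toReal *
        ∑ a', πρ s' a' * Qρ s' a') :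
    ∀ s, ∑ a, πρ s a * Qρ s a ≥ ∑ a, (πg s a).toReal * Qg s a := by
  obtain ⟨Vg, hVg⟩ : ∃ V : S → ℝ, ∀ s, V s = ∑ a, (πg s a).toReal * Qg s a :=
    ⟨_, fun _ => rfl⟩
  obtain ⟨Vρ, hVρ⟩ : ∃ V : S → ℝ, ∀ s, V s = ∑ a, πρ s a * Qρ s a :=
    ⟨_, fun _ => rfl⟩
  have hπρ_nonneg : ∀ s a, 0 ≤ πρ s a := by
    intro s a; rw [hπρ]
    split
    · exact div_nonneg ENNReal.toReal_nonneg (hc_pos s).le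
    · exact le_refl 0
  have hπρ_sum : ∀ s, ∑ a, πρ s a = 1 := by
    intro s
    have h1 : ∑ a, πρ s a
        = ∑ a ∈ univ.filter (fun a => t s ≤ Qg s a), (πg s a).toReal / c s := by
      rw [Finset.sum_filter]
      exact Finset.sum_congr rfl fun a _ => hπρ s a
    rw [h1, ← Finset.sum_div, ← hc s, div_self (hc_pos s).ne']
  -- c s ≤ 1
  have hc_le : ∀ s, c s ≤ 1 := by
    intro s
    rw [hc s, ← pmf_sum_toReal (πg s)]
    exact Finset.sum_le_sum_of_subset_of_nonneg (Finset.filter_subset _ _)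
      (fun a _ _ => ENNReal.toReal_nonneg)
  -- Step B: conditioning improves the value
  have hB : ∀ s, ∑ a, (πg s a).toReal * Qg s a ≤ ∑ a, πρ s a * Qg s a := by
    intro s
    set H : ℝ := ∑ a ∈ univ.filter (fun a => t s ≤ Qg s a), (πg s a).toReal * Qg s a with hH
    set L : ℝ := ∑ a ∈ univ.filter (fun a => ¬ t s ≤ Qg s a), (πg s a).toReal * Qg s a with hL
    have hsplit : ∑ a, (πg s a).toReal * Qg s a = H + L :=
      (Finset.sum_filter_add_sum_filter_not _ _ _).symm
    have hrhs : ∑ a, πρ s a * Qg s a = H / c s := by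
      have h1 : ∑ a, πρ s a * Qg s a
          = ∑ a ∈ univ.filter (fun a => t s ≤ Qg s a),
              (πg s a).toReal * Qg s a / c s := by
        rw [Finset.sum_filter]
        refine Finset.sum_congr rfl fun a _ => ?_
        rw [hπρ]
        split
        · rw [div_mul_eq_mul_div]
        · rw [zero_mul]
      rw [h1, ← Finset.sum_div]
    have hHt : t s * c s ≤ H := by
      rw [hc s, Finset.mul_sum, hH]
      refine Finset.sum_le_sum fun a ha => ?_
      have := (Finset.mem_filter.mp ha).2
      calc t s * (πg s a).toReal = (πg s a).toReal * t s := mul_comm _ _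
        _ ≤ (πg s a).toReal * Qg s a :=
          mul_le_mul_of_nonneg_left this ENNReal.toReal_nonneg
    have hLt : L ≤ t s * (1 - c s) := by
      have hcomp : ∑ a ∈ univ.filter (fun a => ¬ t s ≤ Qg s a), (πg s a).toReal
          = 1 - c s := by
        have := Finset.sum_filter_add_sum_filter_not (univ : Finset A)
          (fun a => t s ≤ Qg s a) (fun a => (πg s a).toReal)
        rw [pmf_sum_toReal (πg s)] at this
        rw [hc s]; linarith
      rw [← hcomp, Finset.mul_sum, hL]
      refine Finset.sum_le_sum fun a ha => ?_
      have h2 : Qg s a ≤ t s := le_of_not_ge (Finset.mem_filter.mp ha).2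
      calc (πg s a).toReal * Qg s a ≤ (πg s a).toReal * t s :=
            mul_le_mul_of_nonneg_left h2 ENNReal.toReal_nonneg
        _ = t s * (πg s a).toReal := mul_comm _ _
    rw [hsplit, hrhs, le_div_iff₀ (hc_pos s)]
    nlinarith [mul_le_mul_of_nonneg_right hLt (hc_pos s).le,
      mul_le_mul_of_nonneg_right hHt (by linarith [hc_le s] : (0:ℝ) ≤ 1 - c s)]
  -- Bellman difference
  have key : ∀ s a, Qρ s a - Qg s a
      = γ * ∑ s', (P (s, a) s').toReal * (Vρ s' - Vg s') := by
    intro s a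
    rw [hQρ s a, hQg s a]
    simp only [hVρ, hVg, mul_sub, Finset.sum_sub_distrib, mul_add]
    ring
  -- minimum of the difference
  obtain ⟨s0, -, hs0⟩ := Finset.exists_min_image (univ : Finset S)
    (fun s => Vρ s - Vg s) univ_nonempty
  have hm_le : ∀ s, Vρ s0 - Vg s0 ≤ Vρ s - Vg s := fun s => hs0 s (mem_univ s)
  set m : ℝ := Vρ s0 - Vg s0 with hm
  have hstep : ∀ s, γ * m ≤ Vρ s - Vg s := by
    intro s
    have h1 : ∑ a, πρ s a * (Qρ s a - Qg s a) ≤ Vρ s - Vg s := by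
      have h1a : ∑ a, πρ s a * (Qρ s a - Qg s a)
          = Vρ s - ∑ a, πρ s a * Qg s a := by
        rw [hVρ]
        simp only [mul_sub, Finset.sum_sub_distrib]
      rw [h1a, hVg]
      linarith [hB s]
    have h2 : ∀ a, γ * m ≤ Qρ s a - Qg s a := by
      intro a
      rw [key s a]
      refine mul_le_mul_of_nonneg_left ?_ hγ0
      calc m = ∑ s', (P (s, a) s').toReal * m := by
              rw [← Finset.sum_mul, pmf_sum_toReal, one_mul]
        _ ≤ ∑ s', (P (s, a) s').toReal * (Vρ s' - Vg s') :=
            Finset.sum_le_sum fun s' _ =>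
              mul_le_mul_of_nonneg_left (hm_le s') ENNReal.toReal_nonneg
    have h3 : ∑ a, πρ s a * (γ * m) ≤ ∑ a, πρ s a * (Qρ s a - Qg s a) :=
      Finset.sum_le_sum fun a _ =>
        mul_le_mul_of_nonneg_left (h2 a) (hπρ_nonneg s a)
    have h4 : ∑ a, πρ s a * (γ * m) = γ * m := by
      rw [← Finset.sum_mul, hπρ_sum, one_mul]
    linarith
  have hm_nonneg : 0 ≤ m := by
    have := hstep s0
    nlinarith
  intro s
  have := hm_le s
  have hfin : Vg s ≤ Vρ s := by linarith
  rw [hVg, hVρ] at hfin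
  exact hfin
end

section
/- Let S be a finite nonempty type and (A, 𝒜) a measurable space. Let r : S × A → ℝ be bounded measurable, P : S × A → PMF S with s' ↦ P(s,a)(s') jointly measurable in a, and γ ∈ [0,1). Let π_g : S → Measure A assign a probability measure to each state, and let Q_g : S × A → ℝ be bounded measurable satisfying the Bellman equation Q_g(s,a) = r(s,a) + γ · ∑_{s'} P(s,a)(s') · ∫ Q_g(s',a') dπ_g(s')(a') for all s, a. Let t : S → ℝ be such that for every state s, π_g(s)({a : Q_g(s,a) ≥ t(s)}) > 0, and define π_ρ(s) to be the conditional measure of π_g(s) on the set {a : Q_g(s,a) ≥ t(s)}. Let Q_ρ : S × A → ℝ be bounded measurable satisfying the Bellman equation for π_ρ: Q_ρ(s,a) = r(s,a) + γ · ∑_{s'} P(s,a)(s') · ∫ Q_ρ(s',a') dπ_ρ(s')(a') for all s, a. Then for every state s, ∫ Q_ρ(s,a) dπ_ρ(s)(a) ≥ ∫ Q_g(s,a) dπ_g(s)(a). -/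
open MeasureTheory

private lemma integrable_of_bdd' {A : Type*} [MeasurableSpace A] (μ : Measure A)
    [IsFiniteMeasure μ] {f : A → ℝ} (hf : Measurable f) {C : ℝ} (hC : ∀ a, |f a| ≤ C) :
    Integrable f μ := by
  apply Integrable.mono' (integrable_const C) hf.aestronglyMeasurable
  filter_upwards with a
  simpa [Real.norm_eq_abs] using hC a

private lemma cond_integral_ge' {A : Type*} [MeasurableSpace A] (μ : Measure A)
    [IsProbabilityMeasure μ] {f : A → ℝ} (hf : Measurable f) {C : ℝ} (hC : ∀ a, |f a| ≤ C)
    (c : ℝ) (hpos : 0 < μ {a | c ≤ f a}) :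
    ∫ a, f a ∂(ProbabilityTheory.cond μ {a | c ≤ f a}) ≥ ∫ a, f a ∂μ := by
  set B : Set A := {a | c ≤ f a} with hBdef
  have hB : MeasurableSet B := measurableSet_le measurable_const hf
  have hμB_ne_top : μ B ≠ ⊤ := measure_ne_top μ B
  have hμB_le_one : μ B ≤ 1 := prob_le_one
  set p : ℝ := (μ B).toReal with hpdef
  have hp : 0 < p := ENNReal.toReal_pos hpos.ne' hμB_ne_top
  have hp1 : p ≤ 1 := by
    have := ENNReal.toReal_mono (by norm_num) hμB_le_one
    simpa using this
  have hint : Integrable f μ := integrable_of_bdd' μ hf hC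
  have hIB : c * p ≤ ∫ a in B, f a ∂μ := by
    refine setIntegral_ge_of_const_le_real hB hμB_ne_top (fun x hx => hx) hint.integrableOn
  have hμBc : (μ Bᶜ).toReal = 1 - p := by
    rw [measure_compl hB hμB_ne_top, measure_univ,
      ENNReal.toReal_sub_of_le hμB_le_one (by norm_num)]
    simp [hpdef]
  have hIBc : ∫ a in Bᶜ, f a ∂μ ≤ c * (1 - p) := by
    have : ∫ a in Bᶜ, f a ∂μ ≤ ∫ _ in Bᶜ, c ∂μ := by
      refine setIntegral_mono_on hint.integrableOn
        (integrableOn_const (measure_lt_top μ Bᶜ).ne) hB.compl ?_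
      intro x hx
      exact le_of_lt (by simpa [hBdef] using hx)
    simpa [show μ.real Bᶜ = 1 - p from hμBc, mul_comm] using this
  have hcond : ∫ a, f a ∂(ProbabilityTheory.cond μ B) = p⁻¹ * ∫ a in B, f a ∂μ := by
    rw [ProbabilityTheory.cond, integral_smul_measure, ENNReal.toReal_inv]
    rfl
  have hsplit : ∫ a, f a ∂μ = (∫ a in B, f a ∂μ) + ∫ a in Bᶜ, f a ∂μ :=
    (integral_add_compl hB hint).symm
  rw [hcond, hsplit, ge_iff_le, inv_mul_eq_div, le_div_iff₀ hp]
  nlinarith [hIB, hIBc, hp.le, hp1]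

/-- Continuous-action case of Theorem 5.1: the percentile-greedy policy `πρ`,
obtained by conditioning each `πg s` on the set of actions whose action-value
`Qg s` lies above the threshold `t s`, is at least as good as `πg` at every
state. -/
theorem percentile_greedy_improvement_continuous {S A : Type*}
    [Fintype S] [Nonempty S] [MeasurableSpace A]
    (r : S × A → ℝ) (hr_meas : ∀ s, Measurable fun a => r (s, a))
    (hr_bdd : ∃ C, ∀ s a, |r (s, a)| ≤ C)
    (P : S × A → PMF S)
    (hP_meas : ∀ s s', Measurable fun a => (P (s, a) s').toReal)
    (γ : ℝ) (hγ0 : 0 ≤ γ) (hγ1 : γ < 1)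
    (πg : S → Measure A) (hπg : ∀ s, IsProbabilityMeasure (πg s))
    (Qg : S → A → ℝ)
    (hQg_meas : ∀ s, Measurable (Qg s))
    (hQg_bdd : ∃ C, ∀ s a, |Qg s a| ≤ C)
    (hQg : ∀ s a, Qg s a =
      r (s, a) + γ * ∑ s', (P (s, a) s').toReal * ∫ a', Qg s' a' ∂(πg s'))
    (t : S → ℝ)
    (ht_pos : ∀ s, 0 < πg s {a | t s ≤ Qg s a})
    (πρ : S → Measure A)
    (hπρ : ∀ s, πρ s = ProbabilityTheory.cond (πg s) {a | t s ≤ Qg s a})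
    (Qρ : S → A → ℝ)
    (hQρ_meas : ∀ s, Measurable (Qρ s))
    (hQρ_bdd : ∃ C, ∀ s a, |Qρ s a| ≤ C)
    (hQρ : ∀ s a, Qρ s a =
      r (s, a) + γ * ∑ s', (P (s, a) s').toReal * ∫ a', Qρ s' a' ∂(πρ s')) :
    ∀ s, (∫ a, Qρ s a ∂(πρ s)) ≥ ∫ a, Qg s a ∂(πg s) := by
  obtain ⟨Cg, hCg⟩ := hQg_bdd
  obtain ⟨Cρ, hCρ⟩ := hQρ_bdd
  haveI := hπg
  have hπρ_prob : ∀ s, IsProbabilityMeasure (πρ s) := fun s => by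
    rw [hπρ s]
    exact ProbabilityTheory.cond_isProbabilityMeasure (ht_pos s).ne'
  -- sum of transition probabilities is 1
  have hPsum : ∀ x : S × A, ∑ s', ((P x) s').toReal = 1 := by
    intro x
    have h1 : ∑ s', (P x) s' = 1 := by
      rw [← tsum_fintype (L := SummationFilter.unconditional _)]; exact (P x).tsum_coe
    rw [← ENNReal.toReal_sum (fun s' _ => (P x).apply_ne_top s'), h1, ENNReal.toReal_one]
  set W : S → ℝ := fun s => (∫ a, Qρ s a ∂(πρ s)) - ∫ a, Qg s a ∂(πg s) with hW
  obtain ⟨s₀, -, hs₀⟩ := Finset.exists_min_image Finset.univ W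
    ⟨Classical.arbitrary S, Finset.mem_univ _⟩
  have hs₀' : ∀ s, W s₀ ≤ W s := fun s => hs₀ s (Finset.mem_univ s)
  haveI := hπρ_prob s₀
  -- pointwise bound
  have hptw : ∀ a, γ * W s₀ ≤ Qρ s₀ a - Qg s₀ a := by
    intro a
    rw [hQρ s₀ a, hQg s₀ a]
    have key : ∀ s', (P (s₀, a) s').toReal * W s₀ ≤
        (P (s₀, a) s').toReal * (∫ a', Qρ s' a' ∂(πρ s')) -
        (P (s₀, a) s').toReal * (∫ a', Qg s' a' ∂(πg s')) := by
      intro s'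
      have := mul_le_mul_of_nonneg_left (hs₀' s') (ENNReal.toReal_nonneg (a := P (s₀, a) s'))
      simpa [hW, mul_sub] using this
    have hsum : ∑ s', (P (s₀, a) s').toReal * W s₀ ≤
        ∑ s', ((P (s₀, a) s').toReal * (∫ a', Qρ s' a' ∂(πρ s')) -
          (P (s₀, a) s').toReal * (∫ a', Qg s' a' ∂(πg s'))) :=
      Finset.sum_le_sum (fun s' _ => key s')
    have hsum1 : ∑ s', (P (s₀, a) s').toReal * W s₀ = W s₀ := by
      rw [← Finset.sum_mul, hPsum (s₀, a), one_mul]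
    rw [hsum1, Finset.sum_sub_distrib] at hsum
    have h2 := mul_le_mul_of_nonneg_left hsum hγ0
    simp only [mul_sub] at h2
    have hW2 : γ * W s₀ = γ * (∫ a, Qρ s₀ a ∂(πρ s₀)) - γ * ∫ a, Qg s₀ a ∂(πg s₀) := by
      simp [hW, mul_sub]
    linarith [h2, hW2]
  -- integrate the pointwise bound over πρ s₀
  have hintρ : Integrable (Qρ s₀) (πρ s₀) := integrable_of_bdd' _ (hQρ_meas s₀) (hCρ s₀)
  have hintg : Integrable (Qg s₀) (πρ s₀) := integrable_of_bdd' _ (hQg_meas s₀) (hCg s₀)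
  have hintg' : γ * W s₀ ≤ (∫ a, Qρ s₀ a ∂(πρ s₀)) - ∫ a, Qg s₀ a ∂(πρ s₀) := by
    have h := integral_mono (integrable_const (γ * W s₀)) (hintρ.sub hintg) hptw
    simp only [Pi.sub_apply] at h
    rw [integral_const, integral_sub hintρ hintg] at h
    simpa using h
  -- conditioning improvement
  have hcond : ∫ a, Qg s₀ a ∂(πρ s₀) ≥ ∫ a, Qg s₀ a ∂(πg s₀) := by
    rw [hπρ s₀]
    exact cond_integral_ge' (πg s₀) (hQg_meas s₀) (hCg s₀) (t s₀) (ht_pos s₀)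
  have hWeq : W s₀ = (∫ a, Qρ s₀ a ∂(πρ s₀)) - ∫ a, Qg s₀ a ∂(πg s₀) := rfl
  have hW0 : γ * W s₀ ≤ W s₀ := by linarith [hintg', hcond, hWeq]
  have hW0' : 0 ≤ W s₀ := by
    by_contra h
    push_neg at h
    nlinarith [hW0]
  intro s
  have h2 : (0:ℝ) ≤ W s := le_trans hW0' (hs₀' s)
  simp only [hW] at h2
  linarith
end
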